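/- (Corollary 1) There exists no infinite sequence a₀, a₁, a₂, … of channel assignments such that for every t, the assignment a_{t+1} differs from a_t in the channel of exactly one user n_t and R_{n_t}(a_{t+1}) > R_{n_t}(a_t); in other words, every sequence of unilateral strictly rate-improving deviations (in particular, any sequential best-response dynamics) terminates in finitely many steps. Consequently there exists a channel assignment a* that is a pure Nash equilibrium: for every user n and every channel k, R_n(a*) ≥ R_n(a*[n ↦ k]), where a*[n ↦ k] denotes a* with user n's channel changed to k. -/

import Mathlib

open Finset

/-- Pair-interaction term of the potential. -/
private noncomputable def pairT {N K : ℕ} (w : Fin N → ℝ) (a : Fin N → Fin K)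
    (i j : Fin N) : ℝ :=
  if i ≠ j ∧ a i = a j then w i * w j else 0

private lemma pairT_symm {N K : ℕ} (w : Fin N → ℝ) (a : Fin N → Fin K) (i j : Fin N) :
    pairT w a i j = pairT w a j i := by
  unfold pairT
  rw [mul_comm]
  refine if_congr ?_ rfl rfl
  constructor
  · rintro ⟨h1, h2⟩; exact ⟨h1.symm, h2.symm⟩
  · rintro ⟨h1, h2⟩; exact ⟨h1.symm, h2.symm⟩

private lemma pairT_diag {N K : ℕ} (w : Fin N → ℝ) (a : Fin N → Fin K) (n : Fin N) :
    pairT w a n n = 0 := by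
  unfold pairT
  simp

/-- The potential function. -/
private noncomputable def Phi {N K : ℕ} (w : Fin N → ℝ) (u : Fin N → Fin K → ℝ)
    (a : Fin N → Fin K) : ℝ :=
  (∑ m, 2 * w m * Real.log (u m (a m))) - ∑ i, ∑ j, pairT w a i j

/-- Row sum of pairT at n equals the filtered neighbor sum. -/
private lemma row_sum {N K : ℕ} (w : Fin N → ℝ) (a : Fin N → Fin K) (n : Fin N) :
    (∑ j, pairT w a n j)
      = w n * ∑ j ∈ Finset.univ.filter (fun j => j ≠ n ∧ a j = a n), w j := by
  rw [Finset.mul_sum, Finset.sum_filter]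
  refine Finset.sum_congr rfl (fun j _ => ?_)
  unfold pairT
  by_cases h : j ≠ n ∧ a j = a n
  · rw [if_pos ⟨h.1.symm, h.2.symm⟩, if_pos h]
  · rw [if_neg, if_neg h]
    intro hc
    exact h ⟨hc.1.symm, hc.2.symm⟩

/-- Change of the double pair sum under a unilateral update. -/
private lemma double_sum_update {N K : ℕ} (w : Fin N → ℝ) (a : Fin N → Fin K)
    (n : Fin N) (k : Fin K) :
    (∑ i, ∑ j, pairT w (Function.update a n k) i j)
      - (∑ i, ∑ j, pairT w a i j)
      = 2 * ((∑ j, pairT w (Function.update a n k) n j) - (∑ j, pairT w a n j)) := by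
  set a' := Function.update a n k with ha'
  have hoff : ∀ i j : Fin N, i ≠ n → j ≠ n → pairT w a' i j = pairT w a i j := by
    intro i j hi hj
    unfold pairT
    rw [ha', Function.update_of_ne hi, Function.update_of_ne hj]
  -- d i j := pairT w a' i j - pairT w a i j
  have hstep : (∑ i, ∑ j, pairT w a' i j) - (∑ i, ∑ j, pairT w a i j)
      = ∑ i, ∑ j, (pairT w a' i j - pairT w a i j) := by
    rw [← Finset.sum_sub_distrib]
    exact Finset.sum_congr rfl (fun i _ => (Finset.sum_sub_distrib _ _).symm)
  rw [hstep]
  have hsplit : (∑ i, ∑ j, (pairT w a' i j - pairT w a i j))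
      = (∑ j, (pairT w a' n j - pairT w a n j))
        + ∑ i ∈ Finset.univ.erase n, ∑ j, (pairT w a' i j - pairT w a i j) := by
    exact (Finset.add_sum_erase _ (fun i => ∑ j, (pairT w a' i j - pairT w a i j))
      (Finset.mem_univ n)).symm
  rw [hsplit]
  have hinner : ∀ i ∈ Finset.univ.erase n,
      (∑ j, (pairT w a' i j - pairT w a i j)) = pairT w a' i n - pairT w a i n := by
    intro i hi
    have hi' : i ≠ n := Finset.ne_of_mem_erase hi
    refine Finset.sum_eq_single_of_mem n (Finset.mem_univ n) (fun j _ hj => ?_)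
    rw [hoff i j hi' hj, sub_self]
  rw [Finset.sum_congr rfl hinner]
  have hsym : (∑ i ∈ Finset.univ.erase n, (pairT w a' i n - pairT w a i n))
      = ∑ i ∈ Finset.univ.erase n, (pairT w a' n i - pairT w a n i) := by
    refine Finset.sum_congr rfl (fun i _ => ?_)
    rw [pairT_symm, pairT_symm w a]
  rw [hsym, Finset.sum_erase _ (by rw [pairT_diag, pairT_diag, sub_self]),
    Finset.sum_sub_distrib]
  ring

/-- Change of the potential under a unilateral update. -/
private lemma Phi_update {N K : ℕ} (w : Fin N → ℝ) (u : Fin N → Fin K → ℝ)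
    (a : Fin N → Fin K) (n : Fin N) (k : Fin K) :
    Phi w u (Function.update a n k) - Phi w u a
      = 2 * w n *
          ((Real.log (u n k)
            - ∑ j ∈ Finset.univ.filter (fun j => j ≠ n ∧
                Function.update a n k j = Function.update a n k n), w j)
          - (Real.log (u n (a n))
            - ∑ j ∈ Finset.univ.filter (fun j => j ≠ n ∧ a j = a n), w j)) := by
  set a' := Function.update a n k with ha'
  have hfirst : (∑ m, 2 * w m * Real.log (u m (a' m)))
      - (∑ m, 2 * w m * Real.log (u m (a m)))
      = 2 * w n * Real.log (u n k) - 2 * w n * Real.log (u n (a n)) := by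
    rw [← Finset.add_sum_erase _ (fun m => 2 * w m * Real.log (u m (a' m))) (Finset.mem_univ n),
        ← Finset.add_sum_erase _ (fun m => 2 * w m * Real.log (u m (a m))) (Finset.mem_univ n)]
    have h1 : (∑ m ∈ Finset.univ.erase n, 2 * w m * Real.log (u m (a' m)))
        = ∑ m ∈ Finset.univ.erase n, 2 * w m * Real.log (u m (a m)) := by
      refine Finset.sum_congr rfl (fun m hm => ?_)
      rw [ha', Function.update_of_ne (Finset.ne_of_mem_erase hm)]
    rw [h1, ha', Function.update_self]
    ring
  have hdouble := double_sum_update w a n k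
  rw [← ha'] at hdouble
  have hrow1 := row_sum w a' n
  have hrow2 := row_sum w a n
  have ha'n : a' n = k := Function.update_self n k a
  unfold Phi
  rw [ha'n] at hrow1
  -- now assemble
  have : ((∑ m, 2 * w m * Real.log (u m (a' m))) - ∑ i, ∑ j, pairT w a' i j)
      - ((∑ m, 2 * w m * Real.log (u m (a m))) - ∑ i, ∑ j, pairT w a i j)
      = ((∑ m, 2 * w m * Real.log (u m (a' m))) - (∑ m, 2 * w m * Real.log (u m (a m))))
        - ((∑ i, ∑ j, pairT w a' i j) - (∑ i, ∑ j, pairT w a i j)) := by ring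
  rw [this, hfirst, hdouble, hrow1, hrow2]
  rw [ha'n]
  ring

/-- Corollary 1: there is no infinite sequence of unilateral strictly
rate-improving deviations, and a pure Nash equilibrium exists. -/
theorem finite_improvement_and_NEP
    (N K : ℕ) (hN : 1 ≤ N) (hK : 1 ≤ K)
    (P : Fin N → ℝ) (hP : ∀ n, P n ∈ Set.Ioo (0:ℝ) 1)
    (u : Fin N → Fin K → ℝ) (hu : ∀ n k, 0 < u n k)
    (R : Fin N → (Fin N → Fin K) → ℝ)
    (hR : ∀ n a, R n a =
      u n (a n) * P n * ∏ i ∈ Finset.univ.filter (fun i => i ≠ n ∧ a i = a n), (1 - P i)) :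
    (¬ ∃ (seq : ℕ → Fin N → Fin K) (user : ℕ → Fin N),
        ∀ τ : ℕ,
          (∀ i, i ≠ user τ → seq (τ + 1) i = seq τ i) ∧
          seq (τ + 1) (user τ) ≠ seq τ (user τ) ∧
          R (user τ) (seq τ) < R (user τ) (seq (τ + 1))) ∧
    (∃ astar : Fin N → Fin K, ∀ (n : Fin N) (k : Fin K),
        R n (Function.update astar n k) ≤ R n astar) := by
  -- weights
  set w : Fin N → ℝ := fun n => -Real.log (1 - P n) with hw
  have h1P : ∀ n, 0 < 1 - P n := fun n => by have := (hP n).2; linarith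
  have h1P1 : ∀ n, 1 - P n < 1 := fun n => by have := (hP n).1; linarith
  have hwpos : ∀ n, 0 < w n := by
    intro n
    have : Real.log (1 - P n) < 0 := Real.log_neg (h1P n) (h1P1 n)
    simp only [hw]; linarith
  -- positivity of R
  have hRpos : ∀ n a, 0 < R n a := by
    intro n a
    rw [hR]
    refine mul_pos (mul_pos (hu n (a n)) (hP n).1) (Finset.prod_pos (fun i _ => h1P i))
  -- log of R
  have hlogR : ∀ (n : Fin N) (a : Fin N → Fin K),
      Real.log (R n a) = Real.log (u n (a n)) + Real.log (P n)
        - ∑ j ∈ Finset.univ.filter (fun j => j ≠ n ∧ a j = a n), w j := by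
    intro n a
    rw [hR]
    rw [Real.log_mul (ne_of_gt (mul_pos (hu n (a n)) (hP n).1)) (ne_of_gt (Finset.prod_pos (fun i _ => h1P i))),
        Real.log_mul (ne_of_gt (hu n (a n))) (ne_of_gt (hP n).1),
        Real.log_prod (fun i _ => ne_of_gt (h1P i))]
    have : (∑ i ∈ Finset.univ.filter (fun i => i ≠ n ∧ a i = a n), Real.log (1 - P i))
        = -∑ j ∈ Finset.univ.filter (fun j => j ≠ n ∧ a j = a n), w j := by
      rw [← Finset.sum_neg_distrib]
      exact Finset.sum_congr rfl (fun i _ => by simp [hw])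
    rw [this]; ring
  -- potential increase under unilateral improvement
  have hkey : ∀ (a : Fin N → Fin K) (n : Fin N) (k : Fin K),
      Phi w u (Function.update a n k) - Phi w u a
        = 2 * w n * (Real.log (R n (Function.update a n k)) - Real.log (R n a)) := by
    intro a n k
    rw [Phi_update w u a n k, hlogR n (Function.update a n k), hlogR n a,
        Function.update_self]
    ring
  constructor
  · rintro ⟨seq, user, hseq⟩
    have hmono : StrictMono (fun τ => Phi w u (seq τ)) := by
      refine strictMono_nat_of_lt_succ (fun τ => ?_)
      obtain ⟨heq, hne, hlt⟩ := hseq τ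
      set n := user τ
      have hupd : seq (τ + 1) = Function.update (seq τ) n (seq (τ + 1) n) := by
        funext i
        by_cases hi : i = n
        · subst hi; rw [Function.update_self]
        · rw [Function.update_of_ne hi, heq i hi]
      have hk := hkey (seq τ) n (seq (τ + 1) n)
      rw [← hupd] at hk
      have hlog : Real.log (R n (seq τ)) < Real.log (R n (seq (τ + 1))) :=
        Real.log_lt_log (hRpos n (seq τ)) hlt
      have : 0 < Phi w u (seq (τ + 1)) - Phi w u (seq τ) := by
        rw [hk]
        have := hwpos n
        nlinarith
      simpa using by linarith
    obtain ⟨x, y, hxy, hfe⟩ := Finite.exists_ne_map_eq_of_infinite seq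
    exact hxy (hmono.injective (by simp only [hfe]))
  · have : Nonempty (Fin K) := ⟨⟨0, hK⟩⟩
    obtain ⟨astar, hmax⟩ := Finite.exists_max (Phi w u : (Fin N → Fin K) → ℝ)
    refine ⟨astar, fun n k => ?_⟩
    by_contra hcon
    push_neg at hcon
    have hlog : Real.log (R n astar) < Real.log (R n (Function.update astar n k)) :=
      Real.log_lt_log (hRpos n astar) hcon
    have hk := hkey astar n k
    have hle := hmax (Function.update astar n k)
    have := hwpos n
    nlinarith
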